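/- Let γ > 0, c > 0, α = -c/2 + √(c²/4+1), β = 1 - α/(γc), and c_∞ = 1/√(γ(1+γ)). Then β ≥ 0 if and only if c ≥ c_∞. -/
import Mathlib


theorem stmt_9 (γ c : ℝ) (hγ : 0 < γ) (hc : 0 < c)
    (α β cinf : ℝ) (hα : α = -c/2 + Real.sqrt (c^2/4 + 1))
    (hβ : β = 1 - α / (γ * c)) (hcinf : cinf = 1 / Real.sqrt (γ * (1 + γ))) :
    0 ≤ β ↔ cinf ≤ c := by
  have hgpos : (0:ℝ) < γ * (1 + γ) := by positivity
  set g := Real.sqrt (γ * (1 + γ)) with hgdef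
  have hg0 : 0 < g := Real.sqrt_pos.mpr hgpos
  have hg2 : g ^ 2 = γ * (1 + γ) := Real.sq_sqrt hgpos.le
  set s := Real.sqrt (c ^ 2 / 4 + 1) with hsdef
  have hs0 : 0 < s := Real.sqrt_pos.mpr (by positivity)
  have hs2 : s ^ 2 = c ^ 2 / 4 + 1 := Real.sq_sqrt (by positivity)
  have hgc : 0 < γ * c := by positivity
  constructor
  · intro hb
    have h1 : α ≤ γ * c := by
      have h0 : α / (γ * c) ≤ 1 := by
        have := hb
        rw [hβ] at this
        linarith
      exact (div_le_one hgc).mp h0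
    have h2 : s ≤ γ * c + c / 2 := by
      rw [hα] at h1; linarith
    have h4 : 1 ≤ γ * (1 + γ) * c ^ 2 := by nlinarith
    rw [hcinf, div_le_iff₀ hg0]
    nlinarith [mul_pos hc hg0]
  · intro hcin
    have h1 : 1 ≤ c * g := by
      rw [hcinf, div_le_iff₀ hg0] at hcin
      linarith
    have h4 : 1 ≤ γ * (1 + γ) * c ^ 2 := by nlinarith
    have h2 : s ≤ γ * c + c / 2 := by nlinarith
    rw [hβ, hα]
    have : (-c / 2 + s) / (γ * c) ≤ 1 := (div_le_one hgc).mpr (by linarith)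
    linarith
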